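/- Let $X_1, \dots, X_n$ be independent geometric random variables, where $X_i$ has success probability $p_i \in (0,1]$, and suppose there exists $p_{\min} > 0$ with $p_i \ge p_{\min}$ for all $i$. Let $\mu = \mathbb{E}\left[\sum_{i=1}^n X_i\right] = \sum_{i=1}^n \frac{1}{p_i}$. Then for every $\varepsilon \in (0,1)$, $\Pr\left[\sum_{i=1}^n X_i > \left(1 + \frac{\varepsilon}{2}\right)\mu\right] \le e^{-p_{\min}\, \mu\, \varepsilon^2 / 24}$. -/

import Mathlib

open MeasureTheory ProbabilityTheory Real
open scoped ENNReal

lemma aux_log_quad {x : ℝ} (hx0 : 0 < x) (hx : x ≤ 1/2) :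
    Real.log (1 + x) ≤ x - x ^ 2 / 6 := by
  have hy : 0 ≤ x - x ^ 2 / 6 := by nlinarith
  rw [Real.log_le_iff_le_exp (by linarith)]
  have h1 : (1 : ℝ) + (x - x ^ 2 / 6) / 2 ≤ Real.exp ((x - x ^ 2 / 6) / 2) := by
    have := Real.add_one_le_exp ((x - x ^ 2 / 6) / 2)
    linarith
  have h2 : Real.exp (x - x ^ 2 / 6) = Real.exp ((x - x ^ 2 / 6) / 2) ^ 2 := by
    rw [← Real.exp_nat_mul]
    push_cast
    ring_nf
  have h3 : (1 + (x - x ^ 2 / 6) / 2) ^ 2 ≤ Real.exp ((x - x ^ 2 / 6) / 2) ^ 2 := by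
    have h0 : (0:ℝ) ≤ 1 + (x - x ^ 2 / 6) / 2 := by linarith
    exact pow_le_pow_left₀ h0 h1 2
  rw [h2]
  nlinarith [h3]

lemma aux_concave {c s : ℝ} (hc0 : 0 < c) (hc1 : c < 1) (hs0 : 0 ≤ s) (hs1 : s ≤ 1) :
    s * Real.log (1 - c) ≤ Real.log (1 - s * c) := by
  have h := (strictConcaveOn_log_Ioi.concaveOn).2
    (Set.mem_Ioi.mpr (one_pos (α := ℝ))) (Set.mem_Ioi.mpr (show (0:ℝ) < 1 - c by linarith))
    (show (0:ℝ) ≤ 1 - s by linarith) hs0 (by ring)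
  simp only [smul_eq_mul, mul_one, Real.log_one] at h
  have h2 : (1 : ℝ) - s + s * (1 - c) = 1 - s * c := by ring
  rw [h2] at h
  linarith

lemma geom_mgf {Ω : Type*} [MeasurableSpace Ω] (μ : Measure Ω) [IsProbabilityMeasure μ]
    (p : ℝ) (hp0 : 0 < p) (hp1 : p ≤ 1) (X : Ω → ℕ) (hX : Measurable X)
    (hgeom : ∀ k : ℕ, 1 ≤ k → μ {ω | X ω = k} = ENNReal.ofReal (p * (1 - p) ^ (k - 1)))
    (t : ℝ) (hr1 : (1 - p) * Real.exp t < 1) :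
    Integrable (fun ω => Real.exp (t * (X ω : ℝ))) μ ∧
      mgf (fun ω => (X ω : ℝ)) μ t = p * Real.exp t / (1 - (1 - p) * Real.exp t) := by
  set q : ℝ := 1 - p with hq
  have hq0 : 0 ≤ q := by simp [hq]; linarith
  have hq1 : q < 1 := by simp [hq]; linarith
  set r : ℝ := q * Real.exp t with hrdef
  have hr0 : 0 ≤ r := mul_nonneg hq0 (Real.exp_pos t).le
  -- the distribution of X
  set ν : Measure ℕ := μ.map X with hν
  haveI : IsProbabilityMeasure ν := Measure.isProbabilityMeasure_map hX.aemeasurable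
  have hνk : ∀ k : ℕ, ν {k} = μ {ω | X ω = k} := fun k => by
    rw [hν, Measure.map_apply hX (measurableSet_singleton k)]; rfl
  have hνsucc : ∀ j : ℕ, ν {j + 1} = ENNReal.ofReal (p * q ^ j) := fun j => by
    rw [hνk, hgeom (j + 1) (by omega)]; simp [hq]
  -- the exponential identity
  have hexpid : ∀ j : ℕ, Real.exp (t * ((j + 1 : ℕ) : ℝ)) * (p * q ^ j)
      = p * Real.exp t * r ^ j := fun j => by
    have h1 : Real.exp (t * ((j + 1 : ℕ) : ℝ)) = Real.exp t ^ j * Real.exp t := by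
      push_cast
      rw [mul_add, mul_one, Real.exp_add, mul_comm t (j : ℝ), Real.exp_nat_mul]
    rw [h1, hrdef, mul_pow]; ring
  have hsummable : Summable (fun j : ℕ => p * Real.exp t * r ^ j) :=
    (summable_geometric_of_lt_one hr0 hr1).mul_left _
  have hsummable' : Summable (fun j : ℕ => p * q ^ j) :=
    (summable_geometric_of_lt_one hq0 hq1).mul_left _
  -- ν {0} = 0
  have hsum1 : ∑' j : ℕ, ν {j + 1} = 1 := by
    rw [tsum_congr hνsucc, ← ENNReal.ofReal_tsum_of_nonneg (fun j => by positivity) hsummable']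
    rw [tsum_mul_left, tsum_geometric_of_lt_one hq0 hq1]
    have : (1 : ℝ) - q = p := by rw [hq]; ring
    rw [this, mul_inv_cancel₀ hp0.ne']
    simp
  have huniv : ν Set.univ = ∑' k : ℕ, ν {k} := by
    rw [← Set.iUnion_of_singleton ℕ,
      measure_iUnion (fun i j hij => by simp [Function.onFun, hij])
        (fun k => measurableSet_singleton k)]
  have hν0 : ν {0} = 0 := by
    have h1 : ν {0} + ∑' j : ℕ, ν {j + 1} = 1 := by
      rw [← tsum_eq_zero_add' (f := fun k : ℕ => ν {k}) ENNReal.summable, ← huniv, measure_univ]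
    rw [hsum1] at h1
    exact (ENNReal.add_right_inj ENNReal.one_ne_top).mp
      (by rw [add_zero, add_comm]; exact h1)
  -- integrability on ℕ
  set g : ℕ → ℝ := fun k => Real.exp (t * (k : ℝ)) with hg
  have hgint : Integrable g ν := by
    refine ⟨measurable_from_nat.aestronglyMeasurable, ?_⟩
    rw [HasFiniteIntegral, lintegral_countable']
    rw [tsum_eq_zero_add' ENNReal.summable]
    have h0 : ‖g 0‖ₑ * ν {0} = 0 := by rw [hν0, mul_zero]
    have hsucc : ∀ j : ℕ, ‖g (j + 1)‖ₑ * ν {j + 1}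
        = ENNReal.ofReal (p * Real.exp t * r ^ j) := fun j => by
      simp only [hg, hνsucc]
      rw [Real.enorm_eq_ofReal (Real.exp_pos _).le,
        ← ENNReal.ofReal_mul (Real.exp_pos _).le, hexpid j]
    rw [h0, zero_add, tsum_congr hsucc,
      ← ENNReal.ofReal_tsum_of_nonneg (fun j => by positivity) hsummable]
    exact ENNReal.ofReal_lt_top
  have hintμ : Integrable (fun ω => Real.exp (t * (X ω : ℝ))) μ :=
    (integrable_map_measure measurable_from_nat.aestronglyMeasurable hX.aemeasurable).mp hgint
  refine ⟨hintμ, ?_⟩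
  -- compute the mgf
  have hF : ∀ j : ℕ, (ν {j + 1}).toReal • g (j + 1) = p * Real.exp t * r ^ j := fun j => by
    rw [hνsucc, ENNReal.toReal_ofReal (by positivity), smul_eq_mul, mul_comm, hg, hexpid]
  have hFsummable : Summable (fun k : ℕ => (ν {k}).toReal • g k) := by
    rw [← summable_nat_add_iff 1]
    exact hsummable.congr (fun j => (hF j).symm)
  have hmap : mgf (fun ω => (X ω : ℝ)) μ t = ∫ k, g k ∂ν := by
    rw [hν, integral_map hX.aemeasurable measurable_from_nat.aestronglyMeasurable]
    rfl
  rw [hmap, integral_countable' hgint]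
  simp only [Measure.real]
  rw [hFsummable.tsum_eq_zero_add, hν0]
  simp only [ENNReal.toReal_zero, zero_smul, zero_add]
  rw [tsum_congr hF, tsum_mul_left, tsum_geometric_of_lt_one hr0 hr1, div_eq_mul_inv]

/-- Chernoff-type upper-tail bound for sums of independent geometric random variables
(Inequality (3) in the paper's Lemma 1): if `X 1, …, X n` are independent geometric
random variables, `X i` with success probability `p i ∈ (0,1]` and `p i ≥ p_min > 0`,
and `m = E[∑ i, X i] = ∑ i, 1 / p i`, then for every `ε ∈ (0,1)`,
`Pr[∑ i, X i > (1 + ε/2) * m] ≤ exp (-p_min * m * ε² / 24)`. -/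
theorem chernoff_upper_tail_geometric_sum
    {Ω : Type*} [MeasurableSpace Ω] (μ : Measure Ω) [IsProbabilityMeasure μ]
    (n : ℕ) (p : Fin n → ℝ) (hp : ∀ i, 0 < p i ∧ p i ≤ 1)
    (pmin : ℝ) (hpmin : 0 < pmin) (hple : ∀ i, pmin ≤ p i)
    (X : Fin n → Ω → ℕ) (hXmeas : ∀ i, Measurable (X i))
    (hindep : iIndepFun X μ)
    (hgeom : ∀ i, ∀ k : ℕ, 1 ≤ k →
      μ {ω | X i ω = k} = ENNReal.ofReal (p i * (1 - p i) ^ (k - 1)))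
    (ε : ℝ) (hε : ε ∈ Set.Ioo (0 : ℝ) 1) :
    (μ {ω | (1 + ε / 2) * (∑ i, 1 / p i) < ∑ i, (X i ω : ℝ)}).toReal
      ≤ Real.exp (-(pmin * (∑ i, 1 / p i) * ε ^ 2) / 24) := by
  obtain ⟨hε0, hε1⟩ := hε
  rcases Nat.eq_zero_or_pos n with hn | hn
  · subst hn
    have hset : {ω : Ω | (1 + ε / 2) * (∑ i : Fin 0, 1 / p i) < ∑ i : Fin 0, (X i ω : ℝ)} = ∅ := by
      ext ω; simp
    rw [hset]
    simp [Real.exp_nonneg]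
  -- setup
  set m : ℝ := ∑ i, 1 / p i with hm
  have hm0 : 0 ≤ m := Finset.sum_nonneg fun i _ => by
    have := (hp i).1; positivity
  have hpmin1 : pmin ≤ 1 := le_trans (hple ⟨0, hn⟩) (hp ⟨0, hn⟩).2
  set lam : ℝ := ε / 2 with hlam
  have hlam0 : 0 < lam := by positivity
  have hlam2 : lam ≤ 1 / 2 := by rw [hlam]; linarith
  set c : ℝ := lam / (1 + lam) with hc
  have hc0 : 0 < c := by positivity
  have hc1 : c < 1 := by
    rw [hc, div_lt_one (by linarith)]; linarith
  set u : ℝ := pmin * c with hu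
  have hu0 : 0 < u := by positivity
  have hupmin : u < pmin := by
    calc u = pmin * c := hu
    _ < pmin * 1 := by exact mul_lt_mul_of_pos_left hc1 hpmin
    _ = pmin := mul_one pmin
  have h1u : 0 < 1 - u := by linarith
  set t : ℝ := -Real.log (1 - u) with ht
  have hexp_t : Real.exp t = (1 - u)⁻¹ := by
    rw [ht, Real.exp_neg, Real.exp_log h1u]
  have ht_pos : 0 < t := by
    rw [ht, neg_pos]
    exact Real.log_neg h1u (by linarith)
  have ht_ge_u : u ≤ t := by
    have := Real.log_le_sub_one_of_pos h1u
    rw [ht]; linarith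
  have hupi : ∀ i, u < p i := fun i => lt_of_lt_of_le hupmin (hple i)
  have hri : ∀ i, (1 - p i) * Real.exp t < 1 := fun i => by
    rw [hexp_t, ← div_eq_mul_inv, div_lt_one h1u]
    have := hupi i; linarith
  -- the real-valued variables
  set Y : Fin n → Ω → ℝ := fun i ω => ((X i ω : ℕ) : ℝ) with hY
  have hYmeas : ∀ i, Measurable (Y i) := fun i => measurable_from_nat.comp (hXmeas i)
  have hYindep : iIndepFun Y μ :=
    hindep.comp (fun _ (k : ℕ) => (k : ℝ)) (fun _ => measurable_from_nat)
  have hi := fun i => geom_mgf μ (p i) (hp i).1 (hp i).2 (X i) (hXmeas i) (hgeom i) t (hri i)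
  have hS_int : Integrable (fun ω => Real.exp (t * (∑ i, Y i) ω)) μ :=
    hYindep.integrable_exp_mul_sum hYmeas (fun i _ => (hi i).1)
  -- Chernoff bound
  have hchern := measure_ge_le_exp_mul_mgf (X := ∑ i, Y i) (μ := μ) (t := t)
    ((1 + lam) * m) ht_pos.le hS_int
  have hstep1 : (μ {ω | (1 + lam) * m < ∑ i, (X i ω : ℝ)}).toReal
      ≤ (μ {ω | (1 + lam) * m ≤ (∑ i, Y i) ω}).toReal := by
    refine ENNReal.toReal_mono (measure_ne_top μ _) (measure_mono fun ω h => ?_)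
    simp only [Set.mem_setOf_eq, Finset.sum_apply] at h ⊢
    exact le_of_lt h
  -- per-variable mgf bound
  have hmgf_i : ∀ i, mgf (Y i) μ t = (1 - u / p i)⁻¹ := fun i => by
    have hpi := (hp i).1
    have hd : 0 < 1 - (1 - p i) * Real.exp t := by linarith [hri i]
    rw [(hi i).2, hexp_t]
    rw [hexp_t] at hd
    field_simp
    congr 1; ring
  have hbound_i : ∀ i, mgf (Y i) μ t ≤ Real.exp (pmin / p i * Real.log (1 + lam)) := fun i => by
    have hpi := (hp i).1
    have hs1 : pmin / p i ≤ 1 := (div_le_one hpi).mpr (hple i)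
    have hsc : u / p i = pmin / p i * c := by rw [hu]; ring
    have h1c : (1 : ℝ) - c = (1 + lam)⁻¹ := by rw [hc]; field_simp; ring
    have hlog1c : Real.log (1 - c) = -Real.log (1 + lam) := by rw [h1c, Real.log_inv]
    have hcon := aux_concave hc0 hc1 (s := pmin / p i) (by positivity) hs1
    rw [hlog1c] at hcon
    have hpos : 0 < 1 - u / p i := by
      rw [sub_pos, div_lt_one hpi]; exact hupi i
    rw [hmgf_i i, ← Real.exp_log (inv_pos.mpr hpos), Real.log_inv]
    apply Real.exp_le_exp.mpr
    rw [hsc] at hpos ⊢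
    linarith
  -- product bound
  have hprod : mgf (∑ i, Y i) μ t ≤ Real.exp (pmin * m * Real.log (1 + lam)) := by
    rw [hYindep.mgf_sum hYmeas Finset.univ]
    calc (∏ i, mgf (Y i) μ t)
        ≤ ∏ i, Real.exp (pmin / p i * Real.log (1 + lam)) :=
          Finset.prod_le_prod (fun i _ => mgf_nonneg) (fun i _ => hbound_i i)
      _ = Real.exp (∑ i, pmin / p i * Real.log (1 + lam)) := (Real.exp_sum _ _).symm
      _ = Real.exp (pmin * m * Real.log (1 + lam)) := by
          congr 1
          rw [← Finset.sum_mul]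
          congr 1
          rw [hm, Finset.mul_sum]
          exact Finset.sum_congr rfl fun i _ => (mul_one_div pmin (p i)).symm
  -- final exponent computation
  have hexp_ineq : Real.exp (-t * ((1 + lam) * m)) * Real.exp (pmin * m * Real.log (1 + lam))
      ≤ Real.exp (-(pmin * m * ε ^ 2) / 24) := by
    rw [← Real.exp_add]
    apply Real.exp_le_exp.mpr
    have hA := aux_log_quad hlam0 hlam2
    have hAm : 0 ≤ pmin * m := by positivity
    have hD : pmin * m * Real.log (1 + lam) ≤ pmin * m * (lam - lam ^ 2 / 6) :=
      mul_le_mul_of_nonneg_left hA hAm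
    have hB : u * ((1 + lam) * m) ≤ t * ((1 + lam) * m) :=
      mul_le_mul_of_nonneg_right ht_ge_u (mul_nonneg (by linarith) hm0)
    have hC : u * ((1 + lam) * m) = pmin * lam * m := by
      rw [hu, hc]; field_simp
    have hlamsq : pmin * m * (lam ^ 2 / 6) = pmin * m * ε ^ 2 / 24 := by
      rw [hlam]; ring
    nlinarith [hB, hC, hD, hlamsq]
  calc (μ {ω | (1 + lam) * m < ∑ i, (X i ω : ℝ)}).toReal
      ≤ (μ {ω | (1 + lam) * m ≤ (∑ i, Y i) ω}).toReal := hstep1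
    _ ≤ Real.exp (-t * ((1 + lam) * m)) * mgf (∑ i, Y i) μ t := hchern
    _ ≤ Real.exp (-t * ((1 + lam) * m)) * Real.exp (pmin * m * Real.log (1 + lam)) :=
        mul_le_mul_of_nonneg_left hprod (Real.exp_nonneg _)
    _ ≤ Real.exp (-(pmin * m * ε ^ 2) / 24) := hexp_ineq
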